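/- Combining the previous two lemmas: if Q(s,·) is L-Lipschitz for each s and π' is any policy, then E_{s∼ρ̂, a∼π'(·|s)} |Q(s,a) − Q^{π'}(s,a)| ≤ (1/(1−γ)) E_{(s,a)∼ρ^{π'}_{ρ̂}(s)π'(a|s)} [ |Q(s,a) − (B^π Q)(s,a)| + L · W₁(π(·|s), π'(·|s)) ] for any reference policy π. -/

import Mathlib

open Finset

/-- Combined bound: evaluation error of a Lipschitz Q against the true Q-function
of π' is bounded by `1/(1-γ)` times the expected Bellman error w.r.t. any
reference policy π plus `L` times the expected Wasserstein distance. -/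
theorem q_error_bellman_plus_mismatch {S A : Type*} [Fintype S] [Fintype A]
    [MetricSpace A] [Nonempty A]
    (γ : ℝ) (hγ0 : 0 < γ) (hγ1 : γ < 1)
    (T : S → A → S → ℝ) (hT : ∀ s a s', 0 ≤ T s a s') (hT1 : ∀ s a, ∑ s', T s a s' = 1)
    (r : S → A → ℝ)
    (π π' : S → A → ℝ) (hπ : ∀ s a, 0 ≤ π s a) (hπ1 : ∀ s, ∑ a, π s a = 1)
    (hπ' : ∀ s a, 0 ≤ π' s a) (hπ'1 : ∀ s, ∑ a, π' s a = 1)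
    (Q Qπ' : S → A → ℝ)
    (hQπ' : ∀ s a, Qπ' s a = r s a + γ * ∑ s', T s a s' * ∑ a', π' s' a' * Qπ' s' a')
    (L : ℝ) (hL : 0 ≤ L) (hLip : ∀ s a a', |Q s a - Q s a'| ≤ L * dist a a')
    (ρhat : S → ℝ) (hρhat : ∀ s, 0 ≤ ρhat s) (hρhat1 : ∑ s, ρhat s = 1)
    (ρ : ℕ → S → ℝ) (hρ0 : ∀ s, ρ 0 s = ρhat s)
    (hρrec : ∀ i s, ρ (i+1) s = ∑ s', ∑ a', T s' a' s * π' s' a' * ρ i s')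
    (W1 : S → ℝ)
    (hW1 : ∀ s, W1 s = sSup {x | ∃ f : A → ℝ, (∀ a a', |f a - f a'| ≤ dist a a') ∧
        x = |(∑ a, f a * π s a) - ∑ a, f a * π' s a|}) :
    ∑ s, ρhat s * ∑ a, π' s a * |Q s a - Qπ' s a| ≤
      (1 / (1-γ)) * ∑ s, ((1-γ) * ∑' i : ℕ, γ^i * ρ i s) * ∑ a, π' s a *
        (|Q s a - (r s a + γ * ∑ s', T s a s' * ∑ a', π s' a' * Q s' a')| +
          L * W1 s) := by
  have hγ1' : (0:ℝ) < 1 - γ := by linarith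
  -- abbreviations (as plain functions, to keep the goal readable)
  set ε : S → A → ℝ := fun s a =>
    |Q s a - (r s a + γ * ∑ s', T s a s' * ∑ a', π s' a' * Q s' a')| with hεdef
  set u : S → ℝ := fun s => ∑ a, π' s a * |Q s a - Qπ' s a| with hudef
  set c : S → ℝ := fun s => ∑ a, π' s a * ε s a with hcdef
  set g : S → ℝ := fun s => c s + L * W1 s with hgdef
  have hε_nonneg : ∀ s a, 0 ≤ ε s a := fun s a => abs_nonneg _
  have hu_nonneg : ∀ s, 0 ≤ u s := fun s =>
    Finset.sum_nonneg fun a _ => mul_nonneg (hπ' s a) (abs_nonneg _)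
  have hc_nonneg : ∀ s, 0 ≤ c s := fun s =>
    Finset.sum_nonneg fun a _ => mul_nonneg (hπ' s a) (hε_nonneg s a)
  -- basic facts about ρ
  have hρ_nonneg : ∀ i s, 0 ≤ ρ i s := by
    intro i
    induction i with
    | zero => intro s; rw [hρ0]; exact hρhat s
    | succ n ih =>
      intro s
      rw [hρrec]
      exact Finset.sum_nonneg fun s' _ => Finset.sum_nonneg fun a' _ =>
        mul_nonneg (mul_nonneg (hT _ _ _) (hπ' _ _)) (ih s')
  have hρ_sum : ∀ i, ∑ s, ρ i s = 1 := by
    intro i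
    induction i with
    | zero => simp only [hρ0]; exact hρhat1
    | succ n ih =>
      have h1 : ∑ s, ρ (n+1) s = ∑ s', ∑ a', ∑ s, T s' a' s * π' s' a' * ρ n s' := by
        simp only [hρrec]
        rw [Finset.sum_comm]
        apply Finset.sum_congr rfl
        intro s' _
        rw [Finset.sum_comm]
      rw [h1]
      have h2 : ∀ s' ∈ Finset.univ, ∀ a' ∈ (Finset.univ : Finset A),
          ∑ s, T s' a' s * π' s' a' * ρ n s' = π' s' a' * ρ n s' := by
        intro s' _ a' _
        rw [← Finset.sum_mul, ← Finset.sum_mul, hT1, one_mul]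
      calc ∑ s', ∑ a', ∑ s, T s' a' s * π' s' a' * ρ n s'
          = ∑ s', ∑ a', π' s' a' * ρ n s' := by
            exact Finset.sum_congr rfl fun s' hs' => Finset.sum_congr rfl (h2 s' hs')
        _ = ∑ s', ρ n s' := by
            apply Finset.sum_congr rfl
            intro s' _
            rw [← Finset.sum_mul, hπ'1, one_mul]
        _ = 1 := ih
  have hρ_le_one : ∀ i s, ρ i s ≤ 1 := by
    intro i s
    calc ρ i s ≤ ∑ s', ρ i s' :=
          Finset.single_le_sum (fun s' _ => hρ_nonneg i s') (Finset.mem_univ s)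
      _ = 1 := hρ_sum i
  -- W1 facts
  obtain ⟨a0⟩ := ‹Nonempty A›
  have hBdd : ∀ s, BddAbove {x | ∃ f : A → ℝ, (∀ a a', |f a - f a'| ≤ dist a a') ∧
      x = |(∑ a, f a * π s a) - ∑ a, f a * π' s a|} := by
    intro s
    refine ⟨∑ a, dist a a0 * (π s a + π' s a), ?_⟩
    rintro x ⟨f, hf, rfl⟩
    have h1 : (∑ a, f a * π s a) - ∑ a, f a * π' s a
        = ∑ a, (f a - f a0) * (π s a - π' s a) := by
      have e1 : ∑ a, (f a - f a0) * (π s a - π' s a)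
          = (∑ a, f a * π s a) - (∑ a, f a * π' s a)
            - f a0 * ((∑ a, π s a) - ∑ a, π' s a) := by
        have e0 : ∀ a : A, (f a - f a0) * (π s a - π' s a)
            = (f a * π s a - f a * π' s a) - (f a0 * π s a - f a0 * π' s a) := by
          intro a; ring
        rw [Finset.sum_congr rfl fun a _ => e0 a, Finset.sum_sub_distrib,
          Finset.sum_sub_distrib, Finset.sum_sub_distrib,
          ← Finset.mul_sum, ← Finset.mul_sum, mul_sub]
      rw [e1, hπ1, hπ'1, sub_self, mul_zero, sub_zero]
    rw [h1]
    calc |∑ a, (f a - f a0) * (π s a - π' s a)|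
        ≤ ∑ a, |(f a - f a0) * (π s a - π' s a)| := Finset.abs_sum_le_sum_abs _ _
      _ ≤ ∑ a, dist a a0 * (π s a + π' s a) := by
          apply Finset.sum_le_sum
          intro a _
          rw [abs_mul]
          apply mul_le_mul (hf a a0) _ (abs_nonneg _) dist_nonneg
          calc |π s a - π' s a| ≤ |π s a| + |π' s a| := abs_sub _ _
            _ = π s a + π' s a := by
                rw [abs_of_nonneg (hπ s a), abs_of_nonneg (hπ' s a)]
  have hW1_nonneg : ∀ s, 0 ≤ W1 s := by
    intro s
    rw [hW1]
    apply le_csSup (hBdd s)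
    exact ⟨fun _ => 0, fun a a' => by simpa using dist_nonneg, by simp⟩
  have hg_nonneg : ∀ s, 0 ≤ g s := fun s =>
    add_nonneg (hc_nonneg s) (mul_nonneg hL (hW1_nonneg s))
  -- mismatch bound
  have hmismatch : ∀ s,
      |(∑ a, π s a * Q s a) - ∑ a, π' s a * Q s a| ≤ L * W1 s := by
    intro s
    rcases eq_or_lt_of_le hL with hL0 | hL0
    · have hconst : ∀ a, Q s a = Q s a0 := by
        intro a
        have := hLip s a a0
        rw [← hL0, zero_mul] at this
        have := le_antisymm this (abs_nonneg _)
        have := abs_eq_zero.mp this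
        linarith
      have e1 : ∑ a, π s a * Q s a = Q s a0 := by
        calc ∑ a, π s a * Q s a = ∑ a, π s a * Q s a0 := by
              exact Finset.sum_congr rfl fun a _ => by rw [hconst a]
          _ = (∑ a, π s a) * Q s a0 := by rw [Finset.sum_mul]
          _ = Q s a0 := by rw [hπ1, one_mul]
      have e2 : ∑ a, π' s a * Q s a = Q s a0 := by
        calc ∑ a, π' s a * Q s a = ∑ a, π' s a * Q s a0 := by
              exact Finset.sum_congr rfl fun a _ => by rw [hconst a]
          _ = (∑ a, π' s a) * Q s a0 := by rw [Finset.sum_mul]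
          _ = Q s a0 := by rw [hπ'1, one_mul]
      rw [e1, e2, sub_self, abs_zero, ← hL0, zero_mul]
    · set f : A → ℝ := fun a => Q s a / L with hfdef
      have hf : ∀ a a', |f a - f a'| ≤ dist a a' := by
        intro a a'
        have : |f a - f a'| = |Q s a - Q s a'| / L := by
          rw [hfdef]; simp only [div_sub_div_same, abs_div, abs_of_pos hL0]
        rw [this, div_le_iff₀ hL0, mul_comm]
        exact hLip s a a'
      have hmem : |(∑ a, f a * π s a) - ∑ a, f a * π' s a| ≤ W1 s := by
        rw [hW1]
        exact le_csSup (hBdd s) ⟨f, hf, rfl⟩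
      have e3 : |(∑ a, π s a * Q s a) - ∑ a, π' s a * Q s a|
          = L * |(∑ a, f a * π s a) - ∑ a, f a * π' s a| := by
        have e4 : ∑ a, f a * π s a = (∑ a, π s a * Q s a) / L := by
          rw [Finset.sum_div]
          exact Finset.sum_congr rfl fun a _ => by rw [hfdef]; ring
        have e5 : ∑ a, f a * π' s a = (∑ a, π' s a * Q s a) / L := by
          rw [Finset.sum_div]
          exact Finset.sum_congr rfl fun a _ => by rw [hfdef]; ring
        rw [e4, e5, div_sub_div_same, abs_div, abs_of_pos hL0]
        field_simp
      rw [e3]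
      exact mul_le_mul_of_nonneg_left hmem hL
  -- pointwise bound on |Q - Qπ'|
  have hQbound : ∀ s a, |Q s a - Qπ' s a| ≤
      ε s a + γ * ∑ s', T s a s' * (L * W1 s' + u s') := by
    intro s a
    have key : Q s a - Qπ' s a =
        (Q s a - (r s a + γ * ∑ s', T s a s' * ∑ a', π s' a' * Q s' a'))
        + γ * ∑ s', T s a s' *
            ((∑ a', π s' a' * Q s' a') - ∑ a', π' s' a' * Qπ' s' a') := by
      rw [hQπ' s a]
      simp only [mul_sub, Finset.sum_sub_distrib]
      ring
    have hΔ : ∀ s', |(∑ a', π s' a' * Q s' a') - ∑ a', π' s' a' * Qπ' s' a'|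
        ≤ L * W1 s' + u s' := by
      intro s'
      have t1 : |(∑ a', π' s' a' * Q s' a') - ∑ a', π' s' a' * Qπ' s' a'| ≤ u s' := by
        rw [← Finset.sum_sub_distrib]
        calc |∑ a', (π' s' a' * Q s' a' - π' s' a' * Qπ' s' a')|
            ≤ ∑ a', |π' s' a' * Q s' a' - π' s' a' * Qπ' s' a'| :=
              Finset.abs_sum_le_sum_abs _ _
          _ = ∑ a', π' s' a' * |Q s' a' - Qπ' s' a'| := by
              apply Finset.sum_congr rfl
              intro a' _
              rw [← mul_sub, abs_mul, abs_of_nonneg (hπ' s' a')]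
          _ = u s' := rfl
      calc |(∑ a', π s' a' * Q s' a') - ∑ a', π' s' a' * Qπ' s' a'|
          ≤ |(∑ a', π s' a' * Q s' a') - ∑ a', π' s' a' * Q s' a'|
            + |(∑ a', π' s' a' * Q s' a') - ∑ a', π' s' a' * Qπ' s' a'| :=
            abs_sub_le _ _ _
        _ ≤ L * W1 s' + u s' := add_le_add (hmismatch s') t1
    calc |Q s a - Qπ' s a|
        = |(Q s a - (r s a + γ * ∑ s', T s a s' * ∑ a', π s' a' * Q s' a'))
            + γ * ∑ s', T s a s' *
              ((∑ a', π s' a' * Q s' a') - ∑ a', π' s' a' * Qπ' s' a')| := by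
          rw [← key]
      _ ≤ ε s a + |γ * ∑ s', T s a s' *
              ((∑ a', π s' a' * Q s' a') - ∑ a', π' s' a' * Qπ' s' a')| :=
          abs_add_le _ _
      _ ≤ ε s a + γ * ∑ s', T s a s' * (L * W1 s' + u s') := by
          apply add_le_add_right
          rw [abs_mul, abs_of_pos hγ0]
          apply mul_le_mul_of_nonneg_left _ hγ0.le
          calc |∑ s', T s a s' *
                ((∑ a', π s' a' * Q s' a') - ∑ a', π' s' a' * Qπ' s' a')|
              ≤ ∑ s', |T s a s' *
                ((∑ a', π s' a' * Q s' a') - ∑ a', π' s' a' * Qπ' s' a')| :=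
                Finset.abs_sum_le_sum_abs _ _
            _ ≤ ∑ s', T s a s' * (L * W1 s' + u s') := by
                apply Finset.sum_le_sum
                intro s' _
                rw [abs_mul, abs_of_nonneg (hT s a s')]
                exact mul_le_mul_of_nonneg_left (hΔ s') (hT s a s')
  -- aggregated per-state bound
  have hu_step : ∀ s, u s ≤ c s + γ * ∑ s', (∑ a, π' s a * T s a s') * (L * W1 s' + u s') := by
    intro s
    have h1 : u s ≤ ∑ a, π' s a * (ε s a + γ * ∑ s', T s a s' * (L * W1 s' + u s')) := by
      apply Finset.sum_le_sum
      intro a _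
      exact mul_le_mul_of_nonneg_left (hQbound s a) (hπ' s a)
    have h2 : ∑ a, π' s a * (ε s a + γ * ∑ s', T s a s' * (L * W1 s' + u s'))
        = c s + γ * ∑ s', (∑ a, π' s a * T s a s') * (L * W1 s' + u s') := by
      have e0 : ∑ a, π' s a * (ε s a + γ * ∑ s', T s a s' * (L * W1 s' + u s'))
          = (∑ a, π' s a * ε s a)
            + ∑ a, π' s a * (γ * ∑ s', T s a s' * (L * W1 s' + u s')) := by
        rw [← Finset.sum_add_distrib]
        apply Finset.sum_congr rfl
        intro a _
        ring
      rw [e0]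
      congr 1
      calc ∑ a, π' s a * (γ * ∑ s', T s a s' * (L * W1 s' + u s'))
          = ∑ a, ∑ s', γ * (π' s a * T s a s' * (L * W1 s' + u s')) := by
            apply Finset.sum_congr rfl
            intro a _
            rw [Finset.mul_sum, Finset.mul_sum]
            apply Finset.sum_congr rfl
            intro s' _
            ring
        _ = ∑ s', ∑ a, γ * (π' s a * T s a s' * (L * W1 s' + u s')) := Finset.sum_comm
        _ = γ * ∑ s', (∑ a, π' s a * T s a s') * (L * W1 s' + u s') := by
            rw [Finset.mul_sum]
            apply Finset.sum_congr rfl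
            intro s' _
            rw [Finset.sum_mul, Finset.mul_sum]
    exact h1.trans (le_of_eq h2)
  -- occupancy shift
  have hρ_shift : ∀ (i : ℕ),
      ∑ s, ρ i s * ∑ s', (∑ a, π' s a * T s a s') * (L * W1 s' + u s')
        = ∑ s', ρ (i+1) s' * (L * W1 s' + u s') := by
    intro i
    calc ∑ s, ρ i s * ∑ s', (∑ a, π' s a * T s a s') * (L * W1 s' + u s')
        = ∑ s, ∑ s', ∑ a, T s a s' * π' s a * ρ i s * (L * W1 s' + u s') := by
          apply Finset.sum_congr rfl
          intro s _
          rw [Finset.mul_sum]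
          apply Finset.sum_congr rfl
          intro s' _
          rw [Finset.sum_mul, Finset.mul_sum]
          apply Finset.sum_congr rfl
          intro a _
          ring
      _ = ∑ s', ∑ s, ∑ a, T s a s' * π' s a * ρ i s * (L * W1 s' + u s') :=
          Finset.sum_comm
      _ = ∑ s', ρ (i+1) s' * (L * W1 s' + u s') := by
          apply Finset.sum_congr rfl
          intro s' _
          rw [hρrec, Finset.sum_mul]
          apply Finset.sum_congr rfl
          intro s _
          rw [Finset.sum_mul]
  -- one-step recursion for weighted sums
  have hrec : ∀ i, ∑ s, ρ i s * u s ≤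
      (∑ s, ρ i s * c s) + γ * ∑ s', ρ (i+1) s' * (L * W1 s' + u s') := by
    intro i
    calc ∑ s, ρ i s * u s
        ≤ ∑ s, ρ i s * (c s + γ * ∑ s', (∑ a, π' s a * T s a s') * (L * W1 s' + u s')) := by
          apply Finset.sum_le_sum
          intro s _
          exact mul_le_mul_of_nonneg_left (hu_step s) (hρ_nonneg i s)
      _ = (∑ s, ρ i s * c s)
          + γ * ∑ s, ρ i s * ∑ s', (∑ a, π' s a * T s a s') * (L * W1 s' + u s') := by
          rw [Finset.mul_sum, ← Finset.sum_add_distrib]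
          apply Finset.sum_congr rfl
          intro s _
          ring
      _ = (∑ s, ρ i s * c s) + γ * ∑ s', ρ (i+1) s' * (L * W1 s' + u s') := by
          rw [hρ_shift i]
  have hX_nonneg : ∀ s, 0 ≤ L * W1 s + u s := fun s =>
    add_nonneg (mul_nonneg hL (hW1_nonneg s)) (hu_nonneg s)
  -- main induction: partial sums plus remainder
  have main : ∀ n, ∑ s, ρhat s * u s ≤
      (∑ i ∈ Finset.range n, γ^i * ∑ s, ρ i s * g s)
      + γ^n * ∑ s, ρ n s * (L * W1 s + u s) := by
    intro n
    induction n with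
    | zero =>
      simp only [Finset.range_zero, Finset.sum_empty, zero_add, pow_zero, one_mul]
      apply Finset.sum_le_sum
      intro s _
      rw [← hρ0 s]
      apply mul_le_mul_of_nonneg_left _ (hρ_nonneg 0 s)
      have := mul_nonneg hL (hW1_nonneg s)
      linarith
    | succ n ih =>
      have step : γ^n * ∑ s, ρ n s * (L * W1 s + u s)
          ≤ γ^n * ∑ s, ρ n s * g s
            + γ^(n+1) * ∑ s, ρ (n+1) s * (L * W1 s + u s) := by
        have e1 : ∑ s, ρ n s * (L * W1 s + u s)
            = (∑ s, ρ n s * (L * W1 s)) + ∑ s, ρ n s * u s := by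
          rw [← Finset.sum_add_distrib]
          apply Finset.sum_congr rfl
          intro s _
          ring
        have e2 : ∑ s, ρ n s * (L * W1 s + u s)
            ≤ (∑ s, ρ n s * (L * W1 s)) + ((∑ s, ρ n s * c s)
              + γ * ∑ s', ρ (n+1) s' * (L * W1 s' + u s')) := by
          rw [e1]
          exact add_le_add_right (hrec n) _
        have e3 : (∑ s, ρ n s * (L * W1 s)) + (∑ s, ρ n s * c s) = ∑ s, ρ n s * g s := by
          rw [← Finset.sum_add_distrib]
          apply Finset.sum_congr rfl
          intro s _
          rw [hgdef]
          ring
        calc γ^n * ∑ s, ρ n s * (L * W1 s + u s)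
            ≤ γ^n * ((∑ s, ρ n s * (L * W1 s)) + ((∑ s, ρ n s * c s)
              + γ * ∑ s', ρ (n+1) s' * (L * W1 s' + u s'))) :=
              mul_le_mul_of_nonneg_left e2 (pow_nonneg hγ0.le n)
          _ = γ^n * ∑ s, ρ n s * g s
              + γ^(n+1) * ∑ s, ρ (n+1) s * (L * W1 s + u s) := by
              rw [← e3]
              ring
      calc ∑ s, ρhat s * u s
          ≤ (∑ i ∈ Finset.range n, γ^i * ∑ s, ρ i s * g s)
            + γ^n * ∑ s, ρ n s * (L * W1 s + u s) := ih
        _ ≤ (∑ i ∈ Finset.range n, γ^i * ∑ s, ρ i s * g s)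
            + (γ^n * ∑ s, ρ n s * g s
              + γ^(n+1) * ∑ s, ρ (n+1) s * (L * W1 s + u s)) := add_le_add_right step _
        _ = (∑ i ∈ Finset.range (n+1), γ^i * ∑ s, ρ i s * g s)
            + γ^(n+1) * ∑ s, ρ (n+1) s * (L * W1 s + u s) := by
            rw [Finset.sum_range_succ]
            ring
  -- bound the remainder uniformly
  set M : ℝ := ∑ s, (L * W1 s + u s) with hMdef
  have hrem : ∀ n, ∑ s, ρ n s * (L * W1 s + u s) ≤ M := by
    intro n
    apply Finset.sum_le_sum
    intro s _
    calc ρ n s * (L * W1 s + u s) ≤ 1 * (L * W1 s + u s) :=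
          mul_le_mul_of_nonneg_right (hρ_le_one n s) (hX_nonneg s)
      _ = L * W1 s + u s := one_mul _
  have main2 : ∀ n, ∑ s, ρhat s * u s ≤
      (∑ i ∈ Finset.range n, γ^i * ∑ s, ρ i s * g s) + γ^n * M := by
    intro n
    refine (main n).trans (add_le_add_right ?_ _)
    exact mul_le_mul_of_nonneg_left (hrem n) (pow_nonneg hγ0.le n)
  -- summability
  have hgeo : Summable (fun i : ℕ => γ^i) := summable_geometric_of_lt_one hγ0.le hγ1
  have hsum_g : Summable (fun i : ℕ => γ^i * ∑ s, ρ i s * g s) := by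
    apply Summable.of_nonneg_of_le
    · intro i
      exact mul_nonneg (pow_nonneg hγ0.le i)
        (Finset.sum_nonneg fun s _ => mul_nonneg (hρ_nonneg i s) (hg_nonneg s))
    · intro i
      have : ∑ s, ρ i s * g s ≤ ∑ s, g s := by
        apply Finset.sum_le_sum
        intro s _
        calc ρ i s * g s ≤ 1 * g s :=
              mul_le_mul_of_nonneg_right (hρ_le_one i s) (hg_nonneg s)
          _ = g s := one_mul _
      exact mul_le_mul_of_nonneg_left this (pow_nonneg hγ0.le i)
    · exact hgeo.mul_right _
  -- pass to the limit
  have hlim : Filter.Tendsto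
      (fun n => (∑ i ∈ Finset.range n, γ^i * ∑ s, ρ i s * g s) + γ^n * M)
      Filter.atTop (nhds ((∑' i : ℕ, γ^i * ∑ s, ρ i s * g s) + 0)) := by
    apply Filter.Tendsto.add hsum_g.hasSum.tendsto_sum_nat
    have h0 : Filter.Tendsto (fun n : ℕ => γ^n) Filter.atTop (nhds 0) :=
      tendsto_pow_atTop_nhds_zero_of_lt_one hγ0.le hγ1
    have := h0.mul_const M
    rwa [zero_mul] at this
  have final1 : ∑ s, ρhat s * u s ≤ ∑' i : ℕ, γ^i * ∑ s, ρ i s * g s := by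
    have := ge_of_tendsto' hlim main2
    rwa [add_zero] at this
  -- swap the sums
  have hsum_t : ∀ s, Summable (fun i : ℕ => γ^i * ρ i s) := by
    intro s
    apply Summable.of_nonneg_of_le
    · intro i; exact mul_nonneg (pow_nonneg hγ0.le i) (hρ_nonneg i s)
    · intro i
      calc γ^i * ρ i s ≤ γ^i * 1 :=
            mul_le_mul_of_nonneg_left (hρ_le_one i s) (pow_nonneg hγ0.le i)
        _ = γ^i := mul_one _
    · exact hgeo
  have hswap : ∑' i : ℕ, γ^i * ∑ s, ρ i s * g s = ∑ s, (∑' i : ℕ, γ^i * ρ i s) * g s := by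
    have h1 : ∀ i : ℕ, γ^i * ∑ s, ρ i s * g s = ∑ s, γ^i * ρ i s * g s := by
      intro i
      rw [Finset.mul_sum]
      apply Finset.sum_congr rfl
      intro s _
      ring
    rw [tsum_congr h1, Summable.tsum_finsetSum (fun s _ => (hsum_t s).mul_right (g s))]
    apply Finset.sum_congr rfl
    intro s _
    rw [tsum_mul_right]
  -- rewrite the RHS of the goal
  have hv : ∀ s, ∑ a, π' s a * (ε s a + L * W1 s) = g s := by
    intro s
    have e0 : ∑ a, π' s a * (ε s a + L * W1 s)
        = (∑ a, π' s a * ε s a) + (∑ a, π' s a) * (L * W1 s) := by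
      rw [Finset.sum_mul, ← Finset.sum_add_distrib]
      apply Finset.sum_congr rfl
      intro a _
      ring
    rw [e0, hπ'1, one_mul]
  have hrhs : (1 / (1-γ)) * ∑ s, ((1-γ) * ∑' i : ℕ, γ^i * ρ i s) * ∑ a, π' s a *
      (ε s a + L * W1 s) = ∑ s, (∑' i : ℕ, γ^i * ρ i s) * g s := by
    have h1 : ∑ s, ((1-γ) * ∑' i : ℕ, γ^i * ρ i s) * ∑ a, π' s a * (ε s a + L * W1 s)
        = (1-γ) * ∑ s, (∑' i : ℕ, γ^i * ρ i s) * g s := by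
      rw [Finset.mul_sum]
      apply Finset.sum_congr rfl
      intro s _
      rw [hv s]
      ring
    rw [h1, ← mul_assoc, one_div, inv_mul_cancel₀ (ne_of_gt hγ1'), one_mul]
  calc ∑ s, ρhat s * ∑ a, π' s a * |Q s a - Qπ' s a|
      = ∑ s, ρhat s * u s := rfl
    _ ≤ ∑' i : ℕ, γ^i * ∑ s, ρ i s * g s := final1
    _ = ∑ s, (∑' i : ℕ, γ^i * ρ i s) * g s := hswap
    _ = (1 / (1-γ)) * ∑ s, ((1-γ) * ∑' i : ℕ, γ^i * ρ i s) * ∑ a, π' s a *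
        (ε s a + L * W1 s) := hrhs.symm
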